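/- If X and Y are real random variables and Y' has the same distribution as Y but is countermonotonic to X (i.e., Y' is a decreasing rearrangement of Y against X), then for any convex function f, E[f(X + Y')] ≤ E[f(X + Y)]. In the finite setting: for vectors x, y ∈ ℝ^m and any permutation σ of {1,...,m}, if y' is the vector y sorted so that it is oppositely ordered to x, then ∑ᵢ f(xᵢ + y'ᵢ) ≤ ∑ᵢ f(xᵢ + y_{σ(i)}) for every convex f : ℝ → ℝ. -/

import Mathlib

/-- Two-point exchange lemma for convex functions. -/
lemma two_point {f : ℝ → ℝ} (hf : ConvexOn ℝ Set.univ f) {a b c d : ℝ}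
    (hab : a ≤ b) (hcd : c ≤ d) : f (a + d) + f (b + c) ≤ f (a + c) + f (b + d) := by
  rcases eq_or_lt_of_le hab with rfl | hab
  · rw [add_comm (f (a + d))]
  rcases eq_or_lt_of_le hcd with rfl | hcd
  · rw [add_comm (f (a + c))]
  set t : ℝ := (d - c) / ((b - a) + (d - c)) with ht
  have hden : (0:ℝ) < (b - a) + (d - c) := by linarith
  have ht0 : 0 ≤ t := div_nonneg (by linarith) hden.le
  have ht1 : t ≤ 1 := by
    rw [ht, div_le_one hden]; linarith
  have h1 : f (a + d) ≤ (1 - t) * f (a + c) + t * f (b + d) := by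
    have := hf.2 (Set.mem_univ (a + c)) (Set.mem_univ (b + d))
      (by linarith : (0:ℝ) ≤ 1 - t) ht0 (by ring)
    have harg : (1 - t) • (a + c) + t • (b + d) = a + d := by
      simp only [smul_eq_mul]
      rw [ht]; field_simp [hden.ne']
      ring
    rwa [harg] at this
  have h2 : f (b + c) ≤ t * f (a + c) + (1 - t) * f (b + d) := by
    have := hf.2 (Set.mem_univ (a + c)) (Set.mem_univ (b + d))
      ht0 (by linarith : (0:ℝ) ≤ 1 - t) (by ring)
    have harg : t • (a + c) + (1 - t) • (b + d) = b + c := by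
      simp only [smul_eq_mul]
      rw [ht]; field_simp [hden.ne']
      ring
    rwa [harg] at this
  linarith

lemma main_lemma {ι : Type*} [DecidableEq ι] (f : ℝ → ℝ) (hf : ConvexOn ℝ Set.univ f)
    (x y : ι → ℝ) (s : Finset ι) :
    (∀ i ∈ s, ∀ j ∈ s, x i < x j → y j ≤ y i) →
    ∀ π : Equiv.Perm ι, (∀ i ∈ s, π i ∈ s) →
      ∑ i ∈ s, f (x i + y i) ≤ ∑ i ∈ s, f (x i + y (π i)) := by
  induction s using Finset.strongInduction with
  | _ s IH =>
    intro hanti π hπ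
    rcases s.eq_empty_or_nonempty with rfl | hne
    · simp
    -- choose i₀ with x maximal, and among those y minimal
    have hs' : (s.filter (fun i => ∀ j ∈ s, x j ≤ x i)).Nonempty := by
      obtain ⟨i, hi, hmax⟩ := s.exists_max_image x hne
      exact ⟨i, Finset.mem_filter.2 ⟨hi, hmax⟩⟩
    obtain ⟨i₀, hi₀', hymin'⟩ := (s.filter (fun i => ∀ j ∈ s, x j ≤ x i)).exists_min_image y hs'
    obtain ⟨hi₀s, hxmax⟩ := Finset.mem_filter.1 hi₀'
    have hymin : ∀ j ∈ s, y i₀ ≤ y j := by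
      intro j hj
      rcases lt_or_eq_of_le (hxmax j hj) with h | h
      · exact hanti j hj i₀ hi₀s h
      · exact hymin' j (Finset.mem_filter.2 ⟨hj, fun k hk => (hxmax k hk).trans h.symm.le⟩)
    -- image of s under π is s
    have himg : s.image π = s := by
      apply Finset.eq_of_subset_of_card_le
      · intro j hj; obtain ⟨i, hi, rfl⟩ := Finset.mem_image.1 hj; exact hπ i hi
      · rw [Finset.card_image_of_injective _ π.injective]
    obtain ⟨k, hks, hk⟩ := Finset.mem_image.1 (himg ▸ hi₀s)
    set π' : Equiv.Perm ι := (Equiv.swap i₀ k).trans π with hπ'def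
    have hπ'i₀ : π' i₀ = i₀ := by simp [hπ'def, Equiv.swap_apply_left, hk]
    have hπ's : ∀ i ∈ s, π' i ∈ s := by
      intro i hi
      simp only [hπ'def, Equiv.trans_apply]
      rcases eq_or_ne i i₀ with rfl | h1
      · rw [Equiv.swap_apply_left]; exact hπ k hks
      rcases eq_or_ne i k with rfl | h2
      · rw [Equiv.swap_apply_right]; exact hπ i₀ hi₀s
      · rw [Equiv.swap_apply_of_ne_of_ne h1 h2]; exact hπ i hi
    have hπ'erase : ∀ i ∈ s.erase i₀, π' i ∈ s.erase i₀ := by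
      intro i hi
      rw [Finset.mem_erase] at hi ⊢
      refine ⟨fun h => hi.1 (π'.injective (h.trans hπ'i₀.symm)), hπ's i hi.2⟩
    have IH' := IH (s.erase i₀) (Finset.erase_ssubset hi₀s)
      (fun i hi j hj h => hanti i (Finset.mem_of_mem_erase hi) j (Finset.mem_of_mem_erase hj) h)
      π' hπ'erase
    -- key step: ∑_{s} f(x i + y (π' i)) ≤ ∑_{s} f(x i + y (π i))
    have key : ∑ i ∈ s, f (x i + y (π' i)) ≤ ∑ i ∈ s, f (x i + y (π i)) := by
      rcases eq_or_ne k i₀ with rfl | hki₀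
      · have : ∀ i, π' i = π i := by
          intro i; simp [hπ'def, Equiv.swap_self]
        simp [this]
      · have hks' : k ∈ s.erase i₀ := Finset.mem_erase.2 ⟨hki₀, hks⟩
        rw [← Finset.add_sum_erase _ _ hi₀s, ← Finset.add_sum_erase _ _ hi₀s,
            ← Finset.add_sum_erase _ _ hks', ← Finset.add_sum_erase _ _ hks']
        have heq : ∀ i ∈ (s.erase i₀).erase k, π' i = π i := by
          intro i hi
          rw [Finset.mem_erase, Finset.mem_erase] at hi
          simp [hπ'def, Equiv.swap_apply_of_ne_of_ne hi.2.1 hi.1]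
        rw [Finset.sum_congr rfl (fun i hi => by rw [heq i hi])]
        have hπ'k : π' k = π i₀ := by simp [hπ'def, Equiv.swap_apply_right]
        rw [hπ'i₀, hπ'k, hk]
        have htp := two_point hf (hxmax k hks) (hymin (π i₀) (hπ i₀ hi₀s))
        linarith
    calc ∑ i ∈ s, f (x i + y i)
        = f (x i₀ + y i₀) + ∑ i ∈ s.erase i₀, f (x i + y i) :=
          (Finset.add_sum_erase _ _ hi₀s).symm
      _ ≤ f (x i₀ + y i₀) + ∑ i ∈ s.erase i₀, f (x i + y (π' i)) := by linarith
      _ = ∑ i ∈ s, f (x i + y (π' i)) := by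
          rw [← Finset.add_sum_erase _ _ hi₀s, hπ'i₀]
      _ ≤ _ := key

theorem stmt0 (m : ℕ) (x y y' : Fin m → ℝ) (σ τ : Equiv.Perm (Fin m))
    (hy' : y' = y ∘ τ)
    (hopp : ∀ i j, x i < x j → y' j ≤ y' i)
    (f : ℝ → ℝ) (hf : ConvexOn ℝ Set.univ f) :
    ∑ i, f (x i + y' i) ≤ ∑ i, f (x i + y (σ i)) := by
  have := main_lemma f hf x y' Finset.univ
    (fun i _ j _ h => hopp i j h) (σ.trans τ.symm) (fun i _ => Finset.mem_univ _)
  simpa [hy', Function.comp] using this
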